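/- Let n be a positive integer and K ≥ 1 a real number. Let a^{jk} : ℝⁿ → ℝ (1 ≤ j,k ≤ n) be twice continuously differentiable with a^{jk} = a^{kj} and with |a^{jk}| and all its partial derivatives up to order 2 bounded by K; let β : ℝⁿ → ℝ be three times continuously differentiable with 0 ≤ β ≤ 1 and all its partial derivatives up to order 3 bounded by K. Fix real numbers m ≥ 1, λ ≥ 1, μ ≥ 1, γ > 0, and set ξ(x) = γ·e^{μ(6m+β(x))}, ℓ(x) = λγ·(e^{μ(6m+β(x))} − μe^{μ(6m+6)}) and A(x) = Σ_{j,k=1}^n [a^{jk}(x)·∂_jℓ(x)·∂_kℓ(x) − ∂_k(a^{jk}·∂_jℓ)(x)]. Then there exists a constant C depending only on n and K such that for every index k and every x, |∂_k A(x) − 2λ²μ³ξ(x)²·∂_kβ(x)·Ψ(x)| ≤ C·(λ²μ²ξ(x)² + λμ³ξ(x)), where Ψ(x) = Σ_{j,k=1}^n a^{jk}(x)·∂_jβ(x)·∂_kβ(x). -/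

import Mathlib

noncomputable def pd {n : ℕ} (f : EuclideanSpace ℝ (Fin n) → ℝ) (j : Fin n)
    (x : EuclideanSpace ℝ (Fin n)) : ℝ :=
  fderiv ℝ f x (EuclideanSpace.single j 1)

noncomputable def ellFun {n : ℕ} (m lam mu γ : ℝ) (β : EuclideanSpace ℝ (Fin n) → ℝ)
    (x : EuclideanSpace ℝ (Fin n)) : ℝ :=
  lam * γ * (Real.exp (mu * (6 * m + β x)) - mu * Real.exp (mu * (6 * m + 6)))

noncomputable def Afun {n : ℕ} (a : Fin n → Fin n → EuclideanSpace ℝ (Fin n) → ℝ)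
    (ℓ : EuclideanSpace ℝ (Fin n) → ℝ) (x : EuclideanSpace ℝ (Fin n)) : ℝ :=
  ∑ j : Fin n, ∑ k : Fin n,
    (a j k x * pd ℓ j x * pd ℓ k x - pd (fun y => a j k y * pd ℓ j y) k x)

section helpers
variable {n : ℕ}

lemma pd_add {f g : EuclideanSpace ℝ (Fin n) → ℝ} {x : EuclideanSpace ℝ (Fin n)}
    (hf : DifferentiableAt ℝ f x) (hg : DifferentiableAt ℝ g x) (j : Fin n) :
    pd (fun y => f y + g y) j x = pd f j x + pd g j x := by
  simp [pd, fderiv_fun_add hf hg]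

lemma pd_sub {f g : EuclideanSpace ℝ (Fin n) → ℝ} {x : EuclideanSpace ℝ (Fin n)}
    (hf : DifferentiableAt ℝ f x) (hg : DifferentiableAt ℝ g x) (j : Fin n) :
    pd (fun y => f y - g y) j x = pd f j x - pd g j x := by
  simp [pd, fderiv_fun_sub hf hg]

lemma pd_mul {f g : EuclideanSpace ℝ (Fin n) → ℝ} {x : EuclideanSpace ℝ (Fin n)}
    (hf : DifferentiableAt ℝ f x) (hg : DifferentiableAt ℝ g x) (j : Fin n) :
    pd (fun y => f y * g y) j x = pd f j x * g x + f x * pd g j x := by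
  simp only [pd, fderiv_fun_mul hf hg, ContinuousLinearMap.add_apply,
    ContinuousLinearMap.smul_apply, smul_eq_mul]
  ring

lemma pd_const_mul {f : EuclideanSpace ℝ (Fin n) → ℝ} {x : EuclideanSpace ℝ (Fin n)}
    (hf : DifferentiableAt ℝ f x) (c : ℝ) (j : Fin n) :
    pd (fun y => c * f y) j x = c * pd f j x := by
  simp [pd, fderiv_const_mul hf c]

lemma pd_const {x : EuclideanSpace ℝ (Fin n)} (c : ℝ) (j : Fin n) :
    pd (n := n) (fun _ => c) j x = 0 := by
  simp [pd]

lemma pd_sum {ι : Type*} (s : Finset ι) {f : ι → EuclideanSpace ℝ (Fin n) → ℝ}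
    {x : EuclideanSpace ℝ (Fin n)} (h : ∀ i ∈ s, DifferentiableAt ℝ (f i) x) (j : Fin n) :
    pd (fun y => ∑ i ∈ s, f i y) j x = ∑ i ∈ s, pd (f i) j x := by
  simp [pd, fderiv_fun_sum h]

lemma pd_exp {β : EuclideanSpace ℝ (Fin n) → ℝ} {x : EuclideanSpace ℝ (Fin n)}
    (hβ : DifferentiableAt ℝ β x) (c d : ℝ) (j : Fin n) :
    pd (fun y => Real.exp (c * (d + β y))) j x
      = c * pd β j x * Real.exp (c * (d + β x)) := by
  have h : HasFDerivAt (fun y => c * (d + β y)) (c • fderiv ℝ β x) x :=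
    (hβ.hasFDerivAt.const_add d).const_mul c
  have h2 := h.exp
  rw [pd, h2.fderiv]
  simp [pd]
  ring

lemma contDiff_pd {f : EuclideanSpace ℝ (Fin n) → ℝ} {m : ℕ}
    (hf : ContDiff ℝ (m + 1) f) (j : Fin n) : ContDiff ℝ m (pd f j) := by
  have h : ContDiff ℝ m (fderiv ℝ f) := hf.fderiv_right (by norm_cast)
  exact h.clm_apply contDiff_const

lemma abs_double_sum_le {u : Fin n → Fin n → ℝ} {c : ℝ} (h : ∀ j k, |u j k| ≤ c) :
    |∑ j : Fin n, ∑ k : Fin n, u j k| ≤ (n : ℝ)^2 * c := by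
  calc |∑ j : Fin n, ∑ k : Fin n, u j k| ≤ ∑ j : Fin n, |∑ k : Fin n, u j k| :=
        Finset.abs_sum_le_sum_abs _ _
    _ ≤ ∑ j : Fin n, ∑ k : Fin n, |u j k| :=
        Finset.sum_le_sum fun j _ => Finset.abs_sum_le_sum_abs _ _
    _ ≤ ∑ _j : Fin n, ∑ _k : Fin n, c :=
        Finset.sum_le_sum fun j _ => Finset.sum_le_sum fun k _ => h j k
    _ = (n : ℝ)^2 * c := by simp [Finset.sum_const]; ring

lemma abs_triple {p q r c : ℝ} (hc : 0 ≤ c) (hp : |p| ≤ c) (hq : |q| ≤ c) (hr : |r| ≤ c) :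
    |p * q * r| ≤ c ^ 3 := by
  rw [abs_mul, abs_mul]
  calc |p| * |q| * |r| ≤ c * c * c := by
        exact mul_le_mul (mul_le_mul hp hq (abs_nonneg _) hc) hr (abs_nonneg _) (by positivity)
    _ = c ^ 3 := by ring

lemma abs_sub_sub_le (a b c : ℝ) : |a - b - c| ≤ |a| + |b| + |c| := by
  have h : a - b - c = a + -b + -c := by ring
  rw [h]
  calc |a + -b + -c| ≤ |a| + |-b| + |-c| := abs_add_three _ _ _
    _ = |a| + |b| + |c| := by rw [abs_neg, abs_neg]

lemma abs_pair {p q c : ℝ} (hc : 0 ≤ c) (hp : |p| ≤ c) (hq : |q| ≤ c) :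
    |p * q| ≤ c ^ 2 := by
  rw [abs_mul]
  calc |p| * |q| ≤ c * c := mul_le_mul hp hq (abs_nonneg _) hc
    _ = c ^ 2 := by ring

end helpers

set_option maxHeartbeats 1600000 in
/-- The expansion `A_k = 2λ²μ³ξ²β_kΨ + O(λ²)μ²ξ² + O(λ)μ³ξ` of the gradient of the
auxiliary function in the Carleman identity, with a constant depending only on `n`, `K`. -/
theorem stmt8 (n : ℕ) (hn : 0 < n) (K : ℝ) (hK : 1 ≤ K) :
    ∃ C : ℝ, 0 < C ∧
      ∀ (a : Fin n → Fin n → EuclideanSpace ℝ (Fin n) → ℝ)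
        (β : EuclideanSpace ℝ (Fin n) → ℝ) (m lam mu γ : ℝ),
        (∀ j k, ContDiff ℝ 2 (a j k)) →
        (∀ j k, a j k = a k j) →
        (∀ j k x, |a j k x| ≤ K) →
        (∀ j k l x, |pd (a j k) l x| ≤ K) →
        (∀ j k l l' x, |pd (pd (a j k) l) l' x| ≤ K) →
        ContDiff ℝ 3 β →
        (∀ x, 0 ≤ β x ∧ β x ≤ 1) →
        (∀ j x, |pd β j x| ≤ K) →
        (∀ j k x, |pd (pd β j) k x| ≤ K) →
        (∀ j k l x, |pd (pd (pd β j) k) l x| ≤ K) →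
        1 ≤ m → 1 ≤ lam → 1 ≤ mu → 0 < γ →
        ∀ (k : Fin n) (x : EuclideanSpace ℝ (Fin n)),
          |pd (Afun a (ellFun m lam mu γ β)) k x -
              2 * lam ^ 2 * mu ^ 3 * (γ * Real.exp (mu * (6 * m + β x))) ^ 2 *
                pd β k x *
                (∑ j : Fin n, ∑ k' : Fin n, a j k' x * pd β j x * pd β k' x)|
            ≤ C * (lam ^ 2 * mu ^ 2 * (γ * Real.exp (mu * (6 * m + β x))) ^ 2 +
                lam * mu ^ 3 * (γ * Real.exp (mu * (6 * m + β x)))) := by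
  have hn' : (1:ℝ) ≤ (n:ℝ) := by exact_mod_cast hn
  have hK0 : (0:ℝ) < K := lt_of_lt_of_le one_pos hK
  refine ⟨10 * (n:ℝ)^2 * K^4, by positivity, ?_⟩
  intro a β m lam mu γ ha2 hsym haK haK1 haK2 hβ3 hβ01 hβK1 hβK2 hβK3 hm hlam hmu hγ k x
  -- basic smoothness facts
  have hβd : Differentiable ℝ β := hβ3.differentiable (by norm_num)
  have hpdβ : ∀ j, ContDiff ℝ 2 (pd β j) := fun j => contDiff_pd (by exact_mod_cast hβ3) j
  have hpdβd : ∀ j, Differentiable ℝ (pd β j) :=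
    fun j => (hpdβ j).differentiable (by norm_num)
  have hpdβ1d : ∀ j k', Differentiable ℝ (pd (pd β j) k') :=
    fun j k' => (contDiff_pd (m := 1) (by exact_mod_cast hpdβ j) k').differentiable (by norm_num)
  have had : ∀ j k', Differentiable ℝ (a j k') :=
    fun j k' => (ha2 j k').differentiable (by norm_num)
  have hpdad : ∀ j k' l, Differentiable ℝ (pd (a j k') l) :=
    fun j k' l => (contDiff_pd (m := 1) (by exact_mod_cast ha2 j k') l).differentiable (by norm_num)
  obtain ⟨E, hEdef⟩ : ∃ E : EuclideanSpace ℝ (Fin n) → ℝ,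
      E = fun y => Real.exp (mu * (6 * m + β y)) := ⟨_, rfl⟩
  have hEd : Differentiable ℝ E := by
    rw [hEdef]; exact ((hβd.const_add (6*m)).const_mul mu).exp
  have hEpos : ∀ y, 0 < E y := fun y => by simp only [hEdef]; positivity
  have hpdE : ∀ (j : Fin n) y, pd E j y = mu * pd β j y * E y := by
    intro j y
    rw [hEdef]
    exact pd_exp (hβd y) mu (6*m) j
  have hEx : Real.exp (mu * (6 * m + β x)) = E x := by rw [hEdef]
  rw [hEx]
  -- the functions Ψ and G
  obtain ⟨Ψf, hΨdef⟩ : ∃ Ψf : EuclideanSpace ℝ (Fin n) → ℝ,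
      Ψf = fun y => ∑ j : Fin n, ∑ k' : Fin n, a j k' y * pd β j y * pd β k' y := ⟨_, rfl⟩
  obtain ⟨Gf, hGdef⟩ : ∃ Gf : EuclideanSpace ℝ (Fin n) → ℝ,
      Gf = fun y => ∑ j : Fin n, ∑ k' : Fin n,
        (pd (a j k') k' y * pd β j y + a j k' y * pd (pd β j) k' y
          + mu * (a j k' y * pd β j y * pd β k' y)) := ⟨_, rfl⟩
  have hΨd : Differentiable ℝ Ψf := by
    rw [hΨdef]
    exact Differentiable.fun_sum fun j _ => Differentiable.fun_sum fun k' _ =>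
      ((had j k').mul (hpdβd j)).mul (hpdβd k')
  have hGd : Differentiable ℝ Gf := by
    rw [hGdef]
    exact Differentiable.fun_sum fun j _ => Differentiable.fun_sum fun k' _ =>
      (((hpdad j k' k').mul (hpdβd j)).add ((had j k').mul (hpdβ1d j k'))).add
        ((((had j k').mul (hpdβd j)).mul (hpdβd k')).const_mul mu)
  have hΨx : (∑ j : Fin n, ∑ k' : Fin n, a j k' x * pd β j x * pd β k' x) = Ψf x := by
    rw [hΨdef]
  rw [hΨx]
  -- step 1 : derivative of the weight
  have hpdℓ : ∀ j : Fin n, pd (ellFun m lam mu γ β) j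
      = fun y => lam * γ * mu * (pd β j y * E y) := by
    intro j
    funext y
    have h1 : ellFun m lam mu γ β
        = fun z => lam * γ * (E z - mu * Real.exp (mu * (6 * m + 6))) := by
      funext z; rw [hEdef]; rfl
    rw [h1]
    have h2 : pd (fun z => lam * γ * (E z - mu * Real.exp (mu * (6 * m + 6)))) j y
        = lam * γ * pd (fun z => E z - mu * Real.exp (mu * (6 * m + 6))) j y :=
      pd_const_mul ((hEd y).sub_const _) (lam * γ) j
    have h3 : pd (fun z => E z - mu * Real.exp (mu * (6 * m + 6))) j y
        = pd E j y - pd (fun _ => mu * Real.exp (mu * (6 * m + 6))) j y :=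
      pd_sub (hEd y) (differentiableAt_const _) j
    rw [h2, h3, pd_const, hpdE]
    ring
  -- step 2 : closed form for Afun
  have hA : Afun a (ellFun m lam mu γ β) = fun y =>
      lam^2 * mu^2 * γ^2 * (E y * E y * Ψf y) - lam * mu * γ * (E y * Gf y) := by
    funext y
    simp only [Afun, hΨdef, hGdef, Finset.mul_sum, ← Finset.sum_sub_distrib]
    refine Finset.sum_congr rfl fun j _ => Finset.sum_congr rfl fun k' _ => ?_
    simp only [hpdℓ]
    have hgd : DifferentiableAt ℝ (fun z => lam * γ * mu * (pd β j z * E z)) y :=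
      ((((hpdβd j).mul hEd).const_mul (lam * γ * mu)) y)
    have e1 : pd (fun z => a j k' z * (lam * γ * mu * (pd β j z * E z))) k' y
        = pd (a j k') k' y * (lam * γ * mu * (pd β j y * E y))
          + a j k' y * pd (fun z => lam * γ * mu * (pd β j z * E z)) k' y :=
      pd_mul ((had j k') y) hgd k'
    have e2 : pd (fun z => lam * γ * mu * (pd β j z * E z)) k' y
        = lam * γ * mu * pd (fun z => pd β j z * E z) k' y :=
      pd_const_mul (((hpdβd j).mul hEd) y) (lam * γ * mu) k'
    have e3 : pd (fun z => pd β j z * E z) k' y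
        = pd (pd β j) k' y * E y + pd β j y * pd E k' y :=
      pd_mul (hpdβd j y) (hEd y) k'
    rw [e1, e2, e3, hpdE]
    ring
  -- step 3 : main identity for the difference
  have hEEd : DifferentiableAt ℝ (fun y => E y * E y * Ψf y) x := ((hEd.mul hEd).mul hΨd) x
  have hEGd : DifferentiableAt ℝ (fun y => E y * Gf y) x := (hEd.mul hGd) x
  have hmain : pd (Afun a (ellFun m lam mu γ β)) k x -
        2 * lam ^ 2 * mu ^ 3 * (γ * E x) ^ 2 * pd β k x * Ψf x
      = lam^2 * mu^2 * (γ * E x)^2 * pd Ψf k x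
        - lam * mu^2 * (γ * E x) * (pd β k x * Gf x)
        - lam * mu * (γ * E x) * pd Gf k x := by
    rw [hA]
    have e0 : pd (fun y => lam^2 * mu^2 * γ^2 * (E y * E y * Ψf y)
          - lam * mu * γ * (E y * Gf y)) k x
        = pd (fun y => lam^2 * mu^2 * γ^2 * (E y * E y * Ψf y)) k x
          - pd (fun y => lam * mu * γ * (E y * Gf y)) k x :=
      pd_sub (hEEd.const_mul _) (hEGd.const_mul _) k
    have e1 : pd (fun y => lam^2 * mu^2 * γ^2 * (E y * E y * Ψf y)) k x
        = lam^2 * mu^2 * γ^2 * pd (fun y => E y * E y * Ψf y) k x :=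
      pd_const_mul hEEd _ k
    have e2 : pd (fun y => lam * mu * γ * (E y * Gf y)) k x
        = lam * mu * γ * pd (fun y => E y * Gf y) k x :=
      pd_const_mul hEGd _ k
    have e3 : pd (fun y => E y * E y * Ψf y) k x
        = pd (fun y => E y * E y) k x * Ψf x + (E x * E x) * pd Ψf k x :=
      pd_mul ((hEd.mul hEd) x) (hΨd x) k
    have e4 : pd (fun y => E y * E y) k x = pd E k x * E x + E x * pd E k x :=
      pd_mul (hEd x) (hEd x) k
    have e5 : pd (fun y => E y * Gf y) k x = pd E k x * Gf x + E x * pd Gf k x :=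
      pd_mul (hEd x) (hGd x) k
    rw [e0, e1, e2, e3, e4, e5, hpdE]
    ring
  -- bounds
  have hξ0 : (0:ℝ) < γ * E x := mul_pos hγ (hEpos x)
  have hmu0 : (0:ℝ) ≤ mu := by linarith
  have hlam0 : (0:ℝ) ≤ lam := by linarith
  have hbΨ : |pd Ψf k x| ≤ (n:ℝ)^2 * (3 * K^3) := by
    have hform : pd Ψf k x = ∑ j : Fin n, ∑ k' : Fin n,
        (pd (a j k') k x * pd β j x * pd β k' x
          + a j k' x * pd (pd β j) k x * pd β k' x
          + a j k' x * pd β j x * pd (pd β k') k x) := by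
      rw [hΨdef]
      rw [pd_sum Finset.univ (f := fun j y => ∑ k' : Fin n, a j k' y * pd β j y * pd β k' y)
        (fun j _ => (Differentiable.fun_sum fun k' _ =>
        ((had j k').mul (hpdβd j)).mul (hpdβd k')) x) k]
      refine Finset.sum_congr rfl fun j _ => ?_
      rw [pd_sum Finset.univ (f := fun k' y => a j k' y * pd β j y * pd β k' y)
        (fun k' _ => (((had j k').mul (hpdβd j)).mul (hpdβd k')) x) k]
      refine Finset.sum_congr rfl fun k' _ => ?_
      have e1 : pd (fun y => a j k' y * pd β j y * pd β k' y) k x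
          = pd (fun y => a j k' y * pd β j y) k x * pd β k' x
            + (a j k' x * pd β j x) * pd (pd β k') k x :=
        pd_mul (((had j k').mul (hpdβd j)) x) (hpdβd k' x) k
      have e2 : pd (fun y => a j k' y * pd β j y) k x
          = pd (a j k') k x * pd β j x + a j k' x * pd (pd β j) k x :=
        pd_mul (had j k' x) (hpdβd j x) k
      rw [e1, e2]; ring
    rw [hform]
    apply abs_double_sum_le
    intro j k'
    refine (abs_add_three _ _ _).trans ?_
    have t1 := abs_triple hK0.le (haK1 j k' k x) (hβK1 j x) (hβK1 k' x)
    have t2 := abs_triple hK0.le (haK j k' x) (hβK2 j k x) (hβK1 k' x)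
    have t3 := abs_triple hK0.le (haK j k' x) (hβK1 j x) (hβK2 k' k x)
    linarith
  have hbG : |Gf x| ≤ (n:ℝ)^2 * (3 * (mu * K^3)) := by
    have hGx : Gf x = ∑ j : Fin n, ∑ k' : Fin n,
        (pd (a j k') k' x * pd β j x + a j k' x * pd (pd β j) k' x
          + mu * (a j k' x * pd β j x * pd β k' x)) := by rw [hGdef]
    rw [hGx]
    apply abs_double_sum_le
    intro j k'
    refine (abs_add_three _ _ _).trans ?_
    have t1 := abs_pair hK0.le (haK1 j k' k' x) (hβK1 j x)
    have t2 := abs_pair hK0.le (haK j k' x) (hβK2 j k' x)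
    have t3 : |mu * (a j k' x * pd β j x * pd β k' x)| ≤ mu * K^3 := by
      rw [abs_mul, abs_of_nonneg hmu0]
      exact mul_le_mul_of_nonneg_left
        (abs_triple hK0.le (haK j k' x) (hβK1 j x) (hβK1 k' x)) hmu0
    have hkk : K^2 ≤ mu * K^3 := by
      nlinarith [mul_nonneg (sub_nonneg.mpr hK) (sq_nonneg K),
        mul_nonneg (sub_nonneg.mpr hmu) (pow_nonneg hK0.le 3)]
    linarith
  have hbG' : |pd Gf k x| ≤ (n:ℝ)^2 * (7 * (mu * K^3)) := by
    have hsummand : ∀ j k' : Fin n, Differentiable ℝ (fun y =>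
        pd (a j k') k' y * pd β j y + a j k' y * pd (pd β j) k' y
          + mu * (a j k' y * pd β j y * pd β k' y)) := fun j k' =>
      (((hpdad j k' k').mul (hpdβd j)).add ((had j k').mul (hpdβ1d j k'))).add
        ((((had j k').mul (hpdβd j)).mul (hpdβd k')).const_mul mu)
    have hform : pd Gf k x = ∑ j : Fin n, ∑ k' : Fin n,
        (pd (pd (a j k') k') k x * pd β j x + pd (a j k') k' x * pd (pd β j) k x
          + (pd (a j k') k x * pd (pd β j) k' x + a j k' x * pd (pd (pd β j) k') k x)
          + mu * (pd (a j k') k x * pd β j x * pd β k' x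
              + a j k' x * pd (pd β j) k x * pd β k' x
              + a j k' x * pd β j x * pd (pd β k') k x)) := by
      rw [hGdef]
      rw [pd_sum Finset.univ (f := fun j y => ∑ k' : Fin n,
          (pd (a j k') k' y * pd β j y + a j k' y * pd (pd β j) k' y
            + mu * (a j k' y * pd β j y * pd β k' y)))
        (fun j _ => (Differentiable.fun_sum fun k' _ => hsummand j k') x) k]
      refine Finset.sum_congr rfl fun j _ => ?_
      rw [pd_sum Finset.univ (fun k' _ => hsummand j k' x) k]
      refine Finset.sum_congr rfl fun k' _ => ?_
      have d1 : DifferentiableAt ℝ (fun y => pd (a j k') k' y * pd β j y) x :=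
        ((hpdad j k' k').mul (hpdβd j)) x
      have d2 : DifferentiableAt ℝ (fun y => a j k' y * pd (pd β j) k' y) x :=
        ((had j k').mul (hpdβ1d j k')) x
      have d3 : DifferentiableAt ℝ (fun y => a j k' y * pd β j y * pd β k' y) x :=
        (((had j k').mul (hpdβd j)).mul (hpdβd k')) x
      have e0 : pd (fun y => pd (a j k') k' y * pd β j y + a j k' y * pd (pd β j) k' y
            + mu * (a j k' y * pd β j y * pd β k' y)) k x
          = pd (fun y => pd (a j k') k' y * pd β j y + a j k' y * pd (pd β j) k' y) k x
            + pd (fun y => mu * (a j k' y * pd β j y * pd β k' y)) k x :=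
        pd_add (d1.add d2) (d3.const_mul mu) k
      have e1 : pd (fun y => pd (a j k') k' y * pd β j y + a j k' y * pd (pd β j) k' y) k x
          = pd (fun y => pd (a j k') k' y * pd β j y) k x
            + pd (fun y => a j k' y * pd (pd β j) k' y) k x := pd_add d1 d2 k
      have e2 : pd (fun y => pd (a j k') k' y * pd β j y) k x
          = pd (pd (a j k') k') k x * pd β j x + pd (a j k') k' x * pd (pd β j) k x :=
        pd_mul (hpdad j k' k' x) (hpdβd j x) k
      have e3 : pd (fun y => a j k' y * pd (pd β j) k' y) k x
          = pd (a j k') k x * pd (pd β j) k' x + a j k' x * pd (pd (pd β j) k') k x :=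
        pd_mul (had j k' x) (hpdβ1d j k' x) k
      have e4 : pd (fun y => mu * (a j k' y * pd β j y * pd β k' y)) k x
          = mu * pd (fun y => a j k' y * pd β j y * pd β k' y) k x :=
        pd_const_mul d3 mu k
      have e5 : pd (fun y => a j k' y * pd β j y * pd β k' y) k x
          = pd (fun y => a j k' y * pd β j y) k x * pd β k' x
            + (a j k' x * pd β j x) * pd (pd β k') k x :=
        pd_mul (((had j k').mul (hpdβd j)) x) (hpdβd k' x) k
      have e6 : pd (fun y => a j k' y * pd β j y) k x
          = pd (a j k') k x * pd β j x + a j k' x * pd (pd β j) k x :=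
        pd_mul (had j k' x) (hpdβd j x) k
      rw [e0, e1, e2, e3, e4, e5, e6]
      ring
    rw [hform]
    apply abs_double_sum_le
    intro j k'
    refine (abs_add_three _ _ _).trans ?_
    have tA : |pd (pd (a j k') k') k x * pd β j x + pd (a j k') k' x * pd (pd β j) k x|
        ≤ K^2 + K^2 :=
      (abs_add_le _ _).trans (add_le_add (abs_pair hK0.le (haK2 j k' k' k x) (hβK1 j x))
        (abs_pair hK0.le (haK1 j k' k' x) (hβK2 j k x)))
    have tB : |pd (a j k') k x * pd (pd β j) k' x + a j k' x * pd (pd (pd β j) k') k x|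
        ≤ K^2 + K^2 :=
      (abs_add_le _ _).trans (add_le_add (abs_pair hK0.le (haK1 j k' k x) (hβK2 j k' x))
        (abs_pair hK0.le (haK j k' x) (hβK3 j k' k x)))
    have tC : |mu * (pd (a j k') k x * pd β j x * pd β k' x
          + a j k' x * pd (pd β j) k x * pd β k' x
          + a j k' x * pd β j x * pd (pd β k') k x)| ≤ mu * (3 * K^3) := by
      rw [abs_mul, abs_of_nonneg hmu0]
      refine mul_le_mul_of_nonneg_left ((abs_add_three _ _ _).trans ?_) hmu0
      have u1 := abs_triple hK0.le (haK1 j k' k x) (hβK1 j x) (hβK1 k' x)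
      have u2 := abs_triple hK0.le (haK j k' x) (hβK2 j k x) (hβK1 k' x)
      have u3 := abs_triple hK0.le (haK j k' x) (hβK1 j x) (hβK2 k' k x)
      linarith
    have hkk : K^2 ≤ mu * K^3 := by
      nlinarith [mul_nonneg (sub_nonneg.mpr hK) (sq_nonneg K),
        mul_nonneg (sub_nonneg.mpr hmu) (pow_nonneg hK0.le 3)]
    linarith
  -- assemble
  rw [hmain]
  refine (abs_sub_sub_le _ _ _).trans ?_
  have b1 : |lam^2 * mu^2 * (γ * E x)^2 * pd Ψf k x|
      ≤ lam^2 * mu^2 * (γ * E x)^2 * ((n:ℝ)^2 * (3 * K^3)) := by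
    rw [abs_mul, abs_of_nonneg (by positivity : (0:ℝ) ≤ lam^2 * mu^2 * (γ * E x)^2)]
    exact mul_le_mul_of_nonneg_left hbΨ (by positivity)
  have h02 : (0:ℝ) ≤ lam * mu^2 * (γ * E x) :=
    mul_nonneg (mul_nonneg hlam0 (by positivity)) hξ0.le
  have h03 : (0:ℝ) ≤ lam * mu * (γ * E x) :=
    mul_nonneg (mul_nonneg hlam0 hmu0) hξ0.le
  have b2 : |lam * mu^2 * (γ * E x) * (pd β k x * Gf x)|
      ≤ lam * mu^2 * (γ * E x) * (K * ((n:ℝ)^2 * (3 * (mu * K^3)))) := by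
    rw [abs_mul, abs_of_nonneg h02]
    refine mul_le_mul_of_nonneg_left ?_ h02
    rw [abs_mul]
    exact mul_le_mul (hβK1 k x) hbG (abs_nonneg _) hK0.le
  have b3 : |lam * mu * (γ * E x) * pd Gf k x|
      ≤ lam * mu * (γ * E x) * ((n:ℝ)^2 * (7 * (mu * K^3))) := by
    rw [abs_mul, abs_of_nonneg h03]
    exact mul_le_mul_of_nonneg_left hbG' h03
  have c1 : lam^2 * mu^2 * (γ * E x)^2 * ((n:ℝ)^2 * (3 * K^3))
      ≤ 10 * (n:ℝ)^2 * K^4 * (lam^2 * mu^2 * (γ * E x)^2) := by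
    have h34 : 3 * K^3 ≤ 10 * K^4 := by
      nlinarith [mul_nonneg (sub_nonneg.mpr hK) (pow_nonneg hK0.le 3),
        pow_nonneg hK0.le 3]
    calc lam^2 * mu^2 * (γ * E x)^2 * ((n:ℝ)^2 * (3 * K^3))
        = ((n:ℝ)^2 * (lam^2 * mu^2 * (γ * E x)^2)) * (3 * K^3) := by ring
      _ ≤ ((n:ℝ)^2 * (lam^2 * mu^2 * (γ * E x)^2)) * (10 * K^4) :=
          mul_le_mul_of_nonneg_left h34 (by positivity)
      _ = 10 * (n:ℝ)^2 * K^4 * (lam^2 * mu^2 * (γ * E x)^2) := by ring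
  have c2 : lam * mu^2 * (γ * E x) * (K * ((n:ℝ)^2 * (3 * (mu * K^3))))
      = 3 * (n:ℝ)^2 * K^4 * (lam * mu^3 * (γ * E x)) := by ring
  have c3 : lam * mu * (γ * E x) * ((n:ℝ)^2 * (7 * (mu * K^3)))
      ≤ 7 * (n:ℝ)^2 * K^4 * (lam * mu^3 * (γ * E x)) := by
    have hmm : mu^2 * K^3 ≤ mu^3 * K^4 := by
      have h1 : mu^2 ≤ mu^3 := by
        nlinarith [mul_nonneg (sub_nonneg.mpr hmu) (sq_nonneg mu)]
      have h2 : K^3 ≤ K^4 := by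
        nlinarith [mul_nonneg (sub_nonneg.mpr hK) (pow_nonneg hK0.le 3)]
      exact mul_le_mul h1 h2 (by positivity) (pow_nonneg hmu0 3)
    calc lam * mu * (γ * E x) * ((n:ℝ)^2 * (7 * (mu * K^3)))
        = (7 * (n:ℝ)^2 * (lam * (γ * E x))) * (mu^2 * K^3) := by ring
      _ ≤ (7 * (n:ℝ)^2 * (lam * (γ * E x))) * (mu^3 * K^4) :=
          mul_le_mul_of_nonneg_left hmm
            (mul_nonneg (by positivity) (mul_nonneg hlam0 hξ0.le))
      _ = 7 * (n:ℝ)^2 * K^4 * (lam * mu^3 * (γ * E x)) := by ring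
  have hfin : |lam^2 * mu^2 * (γ * E x)^2 * pd Ψf k x|
      + |lam * mu^2 * (γ * E x) * (pd β k x * Gf x)|
      + |lam * mu * (γ * E x) * pd Gf k x|
      ≤ 10 * (n:ℝ)^2 * K^4 * (lam^2 * mu^2 * (γ * E x)^2)
        + 10 * (n:ℝ)^2 * K^4 * (lam * mu^3 * (γ * E x)) := by linarith
  calc |lam^2 * mu^2 * (γ * E x)^2 * pd Ψf k x|
      + |lam * mu^2 * (γ * E x) * (pd β k x * Gf x)|
      + |lam * mu * (γ * E x) * pd Gf k x|
      ≤ 10 * (n:ℝ)^2 * K^4 * (lam^2 * mu^2 * (γ * E x)^2)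
        + 10 * (n:ℝ)^2 * K^4 * (lam * mu^3 * (γ * E x)) := hfin
    _ = 10 * (n:ℝ)^2 * K^4 * (lam^2 * mu^2 * (γ * E x)^2 + lam * mu^3 * (γ * E x)) := by
        ring
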